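/- Let X be a PSCA(v, t, λ) with v ≥ t ≥ 2 and λ ≥ 1. Then for every symbol w ∈ [v] and every i with 0 ≤ i ≤ t−1, we have λ·(v−1)!/(v−t)! = Σ_{j=0}^{v−1} d_w(j)·C(j, i)·C(v−1−j, t−1−i). -/

import Mathlib

open scoped Classical

/-- A permutation `π` of `[v]` covers a sequence `s` of `t` distinct symbols if the
symbols appear in `π` in the given order, i.e. `π⁻¹(s 0) < ⋯ < π⁻¹(s (t-1))`. -/
def Covers {v t : ℕ} (π : Equiv.Perm (Fin v)) (s : Fin t → Fin v) : Prop :=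
  StrictMono fun i => π.symm (s i)

/-- `X` is a perfect sequence covering array PSCA(v, t, λ): every sequence of `t`
distinct symbols of `[v]` is covered by exactly `λ` permutations of `X` (with multiplicity). -/
def IsPSCA (v t l : ℕ) (X : Multiset (Equiv.Perm (Fin v))) : Prop :=
  ∀ s : Fin t → Fin v, Function.Injective s → X.countP (fun π => Covers π s) = l

/-- `dcount v X w j` is the number of permutations `π` in `X` (with multiplicity)
such that `π(j) = w`. -/
noncomputable def dcount (v : ℕ) (X : Multiset (Equiv.Perm (Fin v))) (w : Fin v) (j : ℕ) : ℕ :=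
  X.countP fun π => ∃ p : Fin v, (p : ℕ) = j ∧ π p = w

open Finset
open scoped Classical

lemma pos_count {t v : ℕ} {f : Fin t → Fin v} (hf : StrictMono f) (k : Fin t) :
    ((Finset.univ.image f).filter (fun x => x < f k)).card = (k : ℕ) := by
  have he : (Finset.univ.image f).filter (fun x => x < f k) = (Finset.Iio k).image f := by
    ext x
    simp only [mem_filter, mem_image, mem_univ, true_and, mem_Iio]
    constructor
    · rintro ⟨⟨m, rfl⟩, hlt⟩
      exact ⟨m, hf.lt_iff_lt.mp hlt, rfl⟩
    · rintro ⟨m, hm, rfl⟩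
      exact ⟨⟨m, rfl⟩, hf.lt_iff_lt.mpr hm⟩
  rw [he, Finset.card_image_of_injective _ hf.injective, Fin.card_Iio]

lemma image_univ_orderEmbOfFin {v k : ℕ} (A : Finset (Fin v)) (h : A.card = k) :
    Finset.univ.image (A.orderEmbOfFin h) = A := by
  apply Finset.coe_injective
  rw [Finset.coe_image, Finset.coe_univ, Set.image_univ, Finset.range_orderEmbOfFin]


section recon
variable {t v i : ℕ} {j : Fin v} {B C : Finset (Fin v)}

lemma filterA_lt (hB : B ⊆ Finset.Iio j) (hC : C ⊆ Finset.Ioi j) :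
    (insert j (B ∪ C)).filter (fun x => x < j) = B := by
  ext x
  simp only [Finset.mem_filter, Finset.mem_insert, Finset.mem_union]
  constructor
  · rintro ⟨rfl | h | h, hlt⟩
    · exact absurd hlt (lt_irrefl _)
    · exact h
    · exact absurd (Finset.mem_Ioi.1 (hC h)) (not_lt_of_gt hlt)
  · intro h
    exact ⟨Or.inr (Or.inl h), Finset.mem_Iio.1 (hB h)⟩

lemma filterA_gt (hB : B ⊆ Finset.Iio j) (hC : C ⊆ Finset.Ioi j) :
    (insert j (B ∪ C)).filter (fun x => j < x) = C := by
  ext x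
  simp only [Finset.mem_filter, Finset.mem_insert, Finset.mem_union]
  constructor
  · rintro ⟨rfl | h | h, hlt⟩
    · exact absurd hlt (lt_irrefl _)
    · exact absurd (Finset.mem_Iio.1 (hB h)) (not_lt_of_gt hlt)
    · exact h
  · intro h
    exact ⟨Or.inr (Or.inr h), Finset.mem_Ioi.1 (hC h)⟩

lemma embA_val (hit : i < t) (hB : B ⊆ Finset.Iio j) (hBc : B.card = i)
    (hC : C ⊆ Finset.Ioi j) (hA : (insert j (B ∪ C)).card = t) :
    (insert j (B ∪ C)).orderEmbOfFin hA ⟨i, hit⟩ = j := by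
  set A := insert j (B ∪ C) with hAdef
  have hjA : j ∈ A := Finset.mem_insert_self _ _
  have : j ∈ Set.range (A.orderEmbOfFin hA) := by
    rw [Finset.range_orderEmbOfFin]; exact hjA
  obtain ⟨k, hk⟩ := this
  have hcnt := pos_count (A.orderEmbOfFin hA).strictMono k
  rw [image_univ_orderEmbOfFin, hk] at hcnt
  rw [filterA_lt hB hC, hBc] at hcnt
  have : k = ⟨i, hit⟩ := Fin.ext hcnt.symm
  rwa [this] at hk

end recon

lemma card_strictmono_fixed {t v i : ℕ} (hit : i < t) (j : Fin v) :
    (Finset.univ.filter (fun f : Fin t → Fin v => StrictMono f ∧ f ⟨i, hit⟩ = j)).card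
      = Nat.choose (j : ℕ) i * Nat.choose (v - 1 - (j : ℕ)) (t - 1 - i) := by
  classical
  set i' : Fin t := ⟨i, hit⟩
  have key : ∀ f : Fin t → Fin v, StrictMono f → f i' = j →
      (insert j (((Finset.univ.image f).filter (fun x => x < j)) ∪
        ((Finset.univ.image f).filter (fun x => j < x))) = Finset.univ.image f)
      ∧ ((Finset.univ.image f).filter (fun x => x < j)).card = i
      ∧ ((Finset.univ.image f).filter (fun x => j < x)).card = t - 1 - i := by
    intro f hf hfi
    have hjmem : j ∈ Finset.univ.image f := by
      rw [← hfi]; exact Finset.mem_image_of_mem f (Finset.mem_univ i')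
    have hB : ((Finset.univ.image f).filter (fun x => x < j)).card = i := by
      have := pos_count hf i'
      rwa [hfi] at this
    have hset : insert j (((Finset.univ.image f).filter (fun x => x < j)) ∪
        ((Finset.univ.image f).filter (fun x => j < x))) = Finset.univ.image f := by
      ext x
      simp only [Finset.mem_insert, Finset.mem_union, Finset.mem_filter]
      constructor
      · rintro (rfl | ⟨h, _⟩ | ⟨h, _⟩) <;> first | exact hjmem | exact h
      · intro hx
        rcases lt_trichotomy x j with h | h | h
        · exact Or.inr (Or.inl ⟨hx, h⟩)
        · exact Or.inl h
        · exact Or.inr (Or.inr ⟨hx, h⟩)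
    have hcardim : (Finset.univ.image f).card = t := by
      rw [Finset.card_image_of_injective _ hf.injective, Finset.card_univ, Fintype.card_fin]
    have hdisj : Disjoint (((Finset.univ.image f).filter (fun x => x < j)))
        (((Finset.univ.image f).filter (fun x => j < x))) := by
      exact Finset.disjoint_filter.2 fun x _ h1 h2 => absurd (h1.trans h2) (lt_irrefl x)
    have hjnot : j ∉ (((Finset.univ.image f).filter (fun x => x < j)) ∪
        ((Finset.univ.image f).filter (fun x => j < x))) := by
      simp only [Finset.mem_union, Finset.mem_filter]
      rintro (⟨_, h⟩ | ⟨_, h⟩) <;> exact lt_irrefl j h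
    have hC : ((Finset.univ.image f).filter (fun x => j < x)).card = t - 1 - i := by
      have h1 : (insert j (((Finset.univ.image f).filter (fun x => x < j)) ∪
          ((Finset.univ.image f).filter (fun x => j < x)))).card = t := by rw [hset, hcardim]
      rw [Finset.card_insert_of_notMem hjnot, Finset.card_union_of_disjoint hdisj, hB] at h1
      omega
    exact ⟨hset, hB, hC⟩
  have hrhs : Nat.choose (j : ℕ) i * Nat.choose (v - 1 - (j : ℕ)) (t - 1 - i)
      = (((Finset.Iio j).powersetCard i) ×ˢ ((Finset.Ioi j).powersetCard (t-1-i))).card := by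
    rw [Finset.card_product, Finset.card_powersetCard, Finset.card_powersetCard,
      Fin.card_Iio, Fin.card_Ioi]
  rw [hrhs]
  apply Finset.card_bij'
    (i := fun f _ => (((Finset.univ.image f).filter (fun x => x < j)),
      ((Finset.univ.image f).filter (fun x => j < x))))
    (j := fun p hp => fun k => (insert j (p.1 ∪ p.2)).orderEmbOfFin (by
      have hm := Finset.mem_product.1 hp
      have h1 := Finset.mem_powersetCard.1 hm.1
      have h2 := Finset.mem_powersetCard.1 hm.2
      have hjn : j ∉ p.1 ∪ p.2 := by
        intro hj
        rcases Finset.mem_union.1 hj with h | h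
        · exact absurd (Finset.mem_Iio.1 (h1.1 h)) (lt_irrefl j)
        · exact absurd (Finset.mem_Ioi.1 (h2.1 h)) (lt_irrefl j)
      have hd : Disjoint p.1 p.2 := by
        rw [Finset.disjoint_left]
        intro a ha hb
        exact absurd ((Finset.mem_Iio.1 (h1.1 ha)).trans (Finset.mem_Ioi.1 (h2.1 hb))) (lt_irrefl a)
      rw [Finset.card_insert_of_notMem hjn, Finset.card_union_of_disjoint hd, h1.2, h2.2]
      omega) k)
  case hi =>
    intro f hf
    obtain ⟨hmono, hval⟩ := (Finset.mem_filter.1 hf).2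
    obtain ⟨_, hBc, hCc⟩ := key f hmono hval
    rw [Finset.mem_product]
    constructor
    · exact Finset.mem_powersetCard.2 ⟨fun x hx => Finset.mem_Iio.2 (Finset.mem_filter.1 hx).2, hBc⟩
    · exact Finset.mem_powersetCard.2 ⟨fun x hx => Finset.mem_Ioi.2 (Finset.mem_filter.1 hx).2, hCc⟩
  case hj =>
    intro p hp
    have hm := Finset.mem_product.1 hp
    have h1 := Finset.mem_powersetCard.1 hm.1
    have h2 := Finset.mem_powersetCard.1 hm.2
    refine Finset.mem_filter.2 ⟨Finset.mem_univ _, ((insert j (p.1 ∪ p.2)).orderEmbOfFin _).strictMono, ?_⟩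
    exact embA_val hit h1.1 h1.2 h2.1 _
  case left_inv =>
    intro f hf
    obtain ⟨hmono, hval⟩ := (Finset.mem_filter.1 hf).2
    obtain ⟨hset, hBc, hCc⟩ := key f hmono hval
    have hfs : ∀ x, f x ∈ insert j ((Finset.univ.image f).filter (fun x => x < j) ∪
        (Finset.univ.image f).filter (fun x => j < x)) := by
      intro x
      rw [hset]
      exact Finset.mem_image_of_mem f (Finset.mem_univ x)
    exact (Finset.orderEmbOfFin_unique _ hfs hmono).symm
  case right_inv =>
    intro p hp
    have hm := Finset.mem_product.1 hp
    have h1 := Finset.mem_powersetCard.1 hm.1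
    have h2 := Finset.mem_powersetCard.1 hm.2
    have himg : ∀ (h : (insert j (p.1 ∪ p.2)).card = t),
        Finset.univ.image (fun k => (insert j (p.1 ∪ p.2)).orderEmbOfFin h k)
          = insert j (p.1 ∪ p.2) := fun h => image_univ_orderEmbOfFin _ h
    rw [himg, filterA_lt h1.1 h2.1, filterA_gt h1.1 h2.1]


lemma card_covers_fixed {v t i : ℕ} (hit : i < t) (π : Equiv.Perm (Fin v)) (w : Fin v) :
    (Finset.univ.filter (fun s : Fin t → Fin v => Covers π s ∧ s ⟨i, hit⟩ = w)).card
      = Nat.choose ((π.symm w : Fin v) : ℕ) i * Nat.choose (v - 1 - ((π.symm w : Fin v) : ℕ)) (t - 1 - i) := by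
  classical
  rw [← card_strictmono_fixed hit (π.symm w)]
  apply Finset.card_bij' (i := fun s _ => fun k => π.symm (s k)) (j := fun f _ => fun k => π (f k))
  case hi =>
    intro s hs
    obtain ⟨hc, hv⟩ := (Finset.mem_filter.1 hs).2
    exact Finset.mem_filter.2 ⟨Finset.mem_univ _, hc, by show π.symm (s ⟨i, hit⟩) = _; rw [hv]⟩
  case hj =>
    intro f hf
    obtain ⟨hm, hv⟩ := (Finset.mem_filter.1 hf).2
    refine Finset.mem_filter.2 ⟨Finset.mem_univ _, ?_, ?_⟩
    · unfold Covers
      simpa using hm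
    · show π (f ⟨i, hit⟩) = w
      rw [hv]; simp
  case left_inv =>
    intro s hs
    funext k
    simp
  case right_inv =>
    intro f hf
    funext k
    simp

lemma covers'_inj {v t : ℕ} {π : Equiv.Perm (Fin v)} {s : Fin t → Fin v}
    (h : Covers π s) : Function.Injective s := by
  have h2 : Function.Injective fun k => π.symm (s k) := h.injective
  intro a b hab
  exact h2 (by simp [hab])

lemma card_inj_fixed {v t i : ℕ} (hit : i < t) (w : Fin v) :
    (Finset.univ.filter (fun s : Fin t → Fin v =>
        Function.Injective s ∧ s ⟨i, hit⟩ = w)).card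
      = (v - 1).descFactorial (t - 1) := by
  classical
  set i' : Fin t := ⟨i, hit⟩
  rw [← Fintype.card_subtype]
  have e1 : {s : Fin t → Fin v // Function.Injective s ∧ s i' = w}
      ≃ {g : {x : Fin t // x ≠ i'} → {y : Fin v // y ≠ w} // Function.Injective g} := {
    toFun := fun s => ⟨fun x => ⟨s.1 x.1, fun h => x.2 (s.2.1 (h.trans s.2.2.symm))⟩,
      fun a b hab => Subtype.ext (s.2.1 (congrArg Subtype.val hab))⟩
    invFun := fun g => ⟨fun x => if h : x = i' then w else (g.1 ⟨x, h⟩).1, by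
      constructor
      · intro a b hab
        dsimp only at hab
        by_cases ha : a = i'
        · by_cases hb : b = i'
          · rw [ha, hb]
          · rw [dif_pos ha, dif_neg hb] at hab
            exact absurd hab.symm (g.1 ⟨b, hb⟩).2
        · by_cases hb : b = i'
          · rw [dif_neg ha, dif_pos hb] at hab
            exact absurd hab (g.1 ⟨a, ha⟩).2
          · rw [dif_neg ha, dif_neg hb] at hab
            have h2 : (⟨a, ha⟩ : {x : Fin t // x ≠ i'}) = ⟨b, hb⟩ := g.2 (Subtype.ext hab)
            exact congrArg Subtype.val h2
      · simp⟩
    left_inv := fun s => by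
      apply Subtype.ext
      funext x
      dsimp only
      by_cases h : x = i'
      · rw [dif_pos h, h, s.2.2]
      · rw [dif_neg h]
    right_inv := fun g => by
      apply Subtype.ext
      funext x
      apply Subtype.ext
      dsimp only
      simp only [dif_neg x.2] }
  rw [Fintype.card_congr e1,
    Fintype.card_congr (Equiv.subtypeInjectiveEquivEmbedding _ _),
    Fintype.card_embedding_eq]
  have c1 : Fintype.card {x : Fin t // x ≠ i'} = t - 1 := by
    simp [Fintype.card_subtype_compl]
  have c2 : Fintype.card {y : Fin v // y ≠ w} = v - 1 := by
    simp [Fintype.card_subtype_compl]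
  rw [c1, c2]

lemma sum_countP {α β : Type*} (X : Multiset α) (S : Finset β) (p : β → α → Prop) :
    ∑ b ∈ S, X.countP (fun a => p b a) =
      (X.map (fun a => (S.filter (fun b => p b a)).card)).sum := by
  classical
  induction X using Multiset.induction with
  | empty => simp
  | cons a X ih =>
    simp only [Multiset.countP_cons, Multiset.map_cons, Multiset.sum_cons,
      Finset.sum_add_distrib, ih]
    rw [add_comm]
    congr 1
    rw [Finset.card_eq_sum_ones, Finset.sum_filter]

lemma sum_range_countP {α : Type*} (X : Multiset α) (v : ℕ) (g : α → ℕ)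
    (hg : ∀ a, g a < v) (c : ℕ → ℕ) :
    ∑ j ∈ Finset.range v, X.countP (fun a => g a = j) * c j =
      (X.map (fun a => c (g a))).sum := by
  classical
  induction X using Multiset.induction with
  | empty => simp
  | cons a X ih =>
    simp only [Multiset.countP_cons, Multiset.map_cons, Multiset.sum_cons, add_mul,
      Finset.sum_add_distrib, ih]
    rw [add_comm]
    congr 1
    simp [Finset.sum_ite_eq, hg a]

/-- Lemma 2.1: for a PSCA(v, t, λ), every symbol `w` and every `0 ≤ i ≤ t-1` satisfy
`λ·(v-1)!/(v-t)! = Σ_j d_w(j)·C(j,i)·C(v-1-j, t-1-i)`. -/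
theorem stmt4 (v t l : ℕ) (ht : 2 ≤ t) (htv : t ≤ v) (hl : 1 ≤ l)
    (X : Multiset (Equiv.Perm (Fin v))) (hX : IsPSCA v t l X)
    (w : Fin v) (i : ℕ) (hi : i ≤ t - 1) :
    l * (Nat.factorial (v - 1) / Nat.factorial (v - t)) =
      ∑ j ∈ Finset.range v, dcount v X w j * Nat.choose j i * Nat.choose (v - 1 - j) (t - 1 - i) := by
  have hit : i < t := by omega
  set i' : Fin t := ⟨i, hit⟩ with hi'
  set S : Finset (Fin t → Fin v) :=
    Finset.univ.filter (fun s => Function.Injective s ∧ s i' = w) with hS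
  have h1 : ∑ s ∈ S, X.countP (fun π => Covers π s) = S.card * l := by
    rw [Finset.sum_congr rfl (fun s hs => hX s (Finset.mem_filter.1 hs).2.1)]
    rw [Finset.sum_const, smul_eq_mul]
  have h3 : ∀ π : Equiv.Perm (Fin v), S.filter (fun s => Covers π s)
      = Finset.univ.filter (fun s => Covers π s ∧ s i' = w) := by
    intro π
    ext s
    simp only [hS, Finset.filter_filter, Finset.mem_filter, Finset.mem_univ, true_and]
    constructor
    · rintro ⟨⟨_, hv⟩, hc⟩; exact ⟨hc, hv⟩
    · rintro ⟨hc, hv⟩; exact ⟨⟨covers'_inj hc, hv⟩, hc⟩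
  have h2 := sum_countP X S (fun s π => Covers π s)
  have h4 : (X.map (fun π => (S.filter (fun s => Covers π s)).card)).sum
      = (X.map (fun π => Nat.choose ((π.symm w : Fin v) : ℕ) i *
          Nat.choose (v - 1 - ((π.symm w : Fin v) : ℕ)) (t - 1 - i))).sum := by
    congr 1
    apply Multiset.map_congr rfl
    intro π _
    rw [h3 π, card_covers_fixed hit π w]
  have h5 : ∀ j : ℕ, dcount v X w j = X.countP (fun π => ((π.symm w : Fin v) : ℕ) = j) := by
    intro j
    apply Multiset.countP_congr rfl
    intro π _
    apply propext
    constructor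
    · rintro ⟨p, hpj, hpw⟩
      rw [← hpj]
      congr 1
      rw [← hpw, Equiv.symm_apply_apply]
    · intro h
      exact ⟨π.symm w, h, Equiv.apply_symm_apply π w⟩
  have h6 : ∑ j ∈ Finset.range v, dcount v X w j * Nat.choose j i * Nat.choose (v - 1 - j) (t - 1 - i)
      = (X.map (fun π => Nat.choose ((π.symm w : Fin v) : ℕ) i *
          Nat.choose (v - 1 - ((π.symm w : Fin v) : ℕ)) (t - 1 - i))).sum := by
    rw [← sum_range_countP X v (fun π => ((π.symm w : Fin v) : ℕ)) (fun π => (π.symm w).is_lt)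
      (fun j => Nat.choose j i * Nat.choose (v - 1 - j) (t - 1 - i))]
    apply Finset.sum_congr rfl
    intro j _
    rw [h5 j, mul_assoc]
  have hcard : S.card = (v - 1).descFactorial (t - 1) := card_inj_fixed hit w
  have hdf : (v - 1).descFactorial (t - 1) = Nat.factorial (v - 1) / Nat.factorial (v - t) := by
    rw [Nat.descFactorial_eq_div (by omega : t - 1 ≤ v - 1)]
    have hvt : v - 1 - (t - 1) = v - t := by omega
    rw [hvt]
  rw [h6, ← h4, ← h2, h1, hcard, hdf, mul_comm]
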